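/- Fix a ∈ ℝ and μ ∈ ℝ, and define G(σ) on (0,∞) by G(σ) = ∫_{−∞}^a (1/(σ√(2π))) e^{−(x−μ)²/(2σ²)} dx. Then for every σ > 0, the derivative with respect to σ of the function μ ↦ ∂G/∂μ — i.e., the mixed second partial ∂²F(a|μ,σ)/∂σ∂μ — equals −(1/(√(2π) σ²)) e^{−((a−μ)/(σ√2))²} [ ((a−μ)/σ)² − 1 ]. -/

import Mathlib

open MeasureTheory Real

lemma gauss_integrable (s : ℝ) (hs : 0 < s) (C : ℝ) :
    Integrable (fun x : ℝ => C * Real.exp (-x ^ 2 / (2 * s ^ 2))) := by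
  have hb : 0 < 1 / (2 * s ^ 2) := by positivity
  have h : (fun x : ℝ => C * Real.exp (-x ^ 2 / (2 * s ^ 2)))
      = fun x => C * Real.exp (-(1 / (2 * s ^ 2)) * x ^ 2) := by
    funext x
    rw [show -x ^ 2 / (2 * s ^ 2) = -(1 / (2 * s ^ 2)) * x ^ 2 by ring]
  rw [h]
  exact (integrable_exp_neg_mul_sq hb).const_mul C

lemma shift_integral (s a m C : ℝ) :
    (∫ x in Set.Iic a, C * Real.exp (-(x - m) ^ 2 / (2 * s ^ 2)))
      = ∫ x in Set.Iic (a - m), C * Real.exp (-x ^ 2 / (2 * s ^ 2)) := by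
  set g : ℝ → ℝ := fun x => C * Real.exp (-x ^ 2 / (2 * s ^ 2)) with hg
  calc (∫ x in Set.Iic a, g (x - m))
      = ∫ x, (Set.Iic a).indicator (fun x => g (x - m)) x :=
        (integral_indicator measurableSet_Iic).symm
    _ = ∫ x, (Set.Iic (a - m)).indicator g (x - m) := by
        congr 1; funext x
        by_cases hx : x ≤ a
        · rw [Set.indicator_of_mem (Set.mem_Iic.2 hx),
            Set.indicator_of_mem (Set.mem_Iic.2 (by linarith))]
        · rw [Set.indicator_of_notMem (by simpa using hx),
            Set.indicator_of_notMem (by simp; linarith)]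
    _ = ∫ x, (Set.Iic (a - m)).indicator g x :=
        integral_sub_right_eq_self ((Set.Iic (a - m)).indicator g) m
    _ = ∫ x in Set.Iic (a - m), g x := integral_indicator measurableSet_Iic

lemma inner_hasDeriv (s a : ℝ) (hs : 0 < s) (m : ℝ) :
    HasDerivAt (fun m : ℝ => ∫ x in Set.Iic a,
        (1 / (s * Real.sqrt (2 * π))) * Real.exp (-(x - m) ^ 2 / (2 * s ^ 2)))
      (-((1 / (s * Real.sqrt (2 * π))) * Real.exp (-(a - m) ^ 2 / (2 * s ^ 2)))) m := by
  set C : ℝ := 1 / (s * Real.sqrt (2 * π)) with hC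
  set g : ℝ → ℝ := fun x => C * Real.exp (-x ^ 2 / (2 * s ^ 2)) with hg
  have hint : Integrable g := gauss_integrable s hs C
  have hcont : Continuous g := by fun_prop
  have hF : ∀ y : ℝ, (∫ x in Set.Iic y, g x)
      = (∫ x in (0:ℝ)..y, g x) + ∫ x in Set.Iic (0:ℝ), g x := by
    intro y
    have h := intervalIntegral.integral_Iic_sub_Iic (μ := volume) (f := g)
      hint.integrableOn hint.integrableOn (a := 0) (b := y)
    linarith [h]
  have hFd : ∀ y : ℝ, HasDerivAt (fun y : ℝ => ∫ x in Set.Iic y, g x) (g y) y := by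
    intro y
    have h1 : HasDerivAt (fun u : ℝ => ∫ x in (0:ℝ)..u, g x) (g y) y :=
      intervalIntegral.integral_hasDerivAt_right hint.intervalIntegrable
        (hcont.stronglyMeasurableAtFilter _ _) hcont.continuousAt
    have h2 := h1.add_const (∫ x in Set.Iic (0:ℝ), g x)
    exact h2.congr_of_eventuallyEq (Filter.Eventually.of_forall fun u => hF u)
  have hsub : HasDerivAt (fun m : ℝ => a - m) (-1 : ℝ) m := (hasDerivAt_id m).const_sub a
  have hcomp := (hFd (a - m)).comp m hsub
  have hcomp' : HasDerivAt (fun m : ℝ => ∫ x in Set.Iic a,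
      C * Real.exp (-(x - m) ^ 2 / (2 * s ^ 2))) (g (a - m) * -1) m :=
    hcomp.congr_of_eventuallyEq (Filter.Eventually.of_forall fun m' => shift_integral s a m' C)
  simpa [hg, mul_comm] using hcomp'

theorem normal_cdf_mixed_partial (a μ : ℝ) :
    ∀ σ : ℝ, 0 < σ →
      deriv (fun s : ℝ =>
          deriv (fun m : ℝ =>
              ∫ x in Set.Iic a,
                (1 / (s * Real.sqrt (2 * π))) * Real.exp (-(x - m) ^ 2 / (2 * s ^ 2))) μ) σ
        = -(1 / (Real.sqrt (2 * π) * σ ^ 2)) *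
            Real.exp (-((a - μ) / (σ * Real.sqrt 2)) ^ 2) *
            (((a - μ) / σ) ^ 2 - 1) := by
  intro σ hσ
  have hev : (fun s : ℝ =>
      deriv (fun m : ℝ => ∫ x in Set.Iic a,
          (1 / (s * Real.sqrt (2 * π))) * Real.exp (-(x - m) ^ 2 / (2 * s ^ 2))) μ)
      =ᶠ[nhds σ] fun s : ℝ =>
        -((1 / (s * Real.sqrt (2 * π))) * Real.exp (-(a - μ) ^ 2 / (2 * s ^ 2))) := by
    filter_upwards [Ioi_mem_nhds hσ] with s hs
    exact (inner_hasDeriv s a hs μ).deriv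
  rw [hev.deriv_eq]
  -- compute the derivative of the explicit function
  have hσ' : σ ≠ 0 := hσ.ne'
  have hS : Real.sqrt (2 * π) ≠ 0 := by positivity
  have hden : HasDerivAt (fun s : ℝ => s * Real.sqrt (2 * π)) (Real.sqrt (2 * π)) σ := by
    simpa using (hasDerivAt_id σ).mul_const (Real.sqrt (2 * π))
  have hfrac : HasDerivAt (fun s : ℝ => 1 / (s * Real.sqrt (2 * π)))
      ((0 * (σ * Real.sqrt (2 * π)) - 1 * Real.sqrt (2 * π)) / (σ * Real.sqrt (2 * π)) ^ 2) σ :=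
    (hasDerivAt_const σ (1:ℝ)).div hden (by positivity)
  have hsq : HasDerivAt (fun s : ℝ => 2 * s ^ 2) (2 * (2 * σ)) σ := by
    simpa [mul_comm] using ((hasDerivAt_pow 2 σ).const_mul 2)
  have harg : HasDerivAt (fun s : ℝ => -(a - μ) ^ 2 / (2 * s ^ 2))
      ((0 * (2 * σ ^ 2) - -(a - μ) ^ 2 * (2 * (2 * σ))) / (2 * σ ^ 2) ^ 2) σ :=
    (hasDerivAt_const σ (-(a - μ) ^ 2)).div hsq (by positivity)
  have hexp := harg.exp
  have hprod := (hfrac.mul hexp).neg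
  rw [(show HasDerivAt (fun s : ℝ => -((1 / (s * Real.sqrt (2 * π))) * Real.exp (-(a - μ) ^ 2 / (2 * s ^ 2)))) _ σ from hprod).deriv]
  have hexpeq : -((a - μ) / (σ * Real.sqrt 2)) ^ 2 = -(a - μ) ^ 2 / (2 * σ ^ 2) := by
    rw [div_pow, mul_pow, Real.sq_sqrt (by norm_num : (0:ℝ) ≤ 2)]
    ring
  rw [hexpeq]
  have hsqpi : Real.sqrt (2 * π) ^ 2 = 2 * π := Real.sq_sqrt (by positivity)
  field_simp
  ring_nf
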